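/- A univariate polynomial p is nonnegative on the interval [a, b] (with a < b) if and only if there exist sums of squares polynomials σ_0, σ_1 such that p(x) = σ_0(x) + (x − a)(b − x) σ_1(x) when deg p is even, or p(x) = (x − a) σ_0(x) + (b − x) σ_1(x) when deg p is odd. -/

import Mathlib

open Polynomial Set Filter Topology
open scoped ComplexConjugate

theorem IsSumSq.sq_mul' {R : Type*} [CommRing R] (a : R) {t : R} (ht : IsSumSq t) :
    IsSumSq (a * a * t) := by
  induction ht with
  | zero => simpa using IsSumSq.zero
  | @sq_add b T pT ih =>
    have h : a * a * (b * b + T) = (a*b)*(a*b) + a*a*T := by ring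
    rw [h]
    exact IsSumSq.sq_add _ ih

theorem IsSumSq.mul'' {R : Type*} [CommRing R] {s t : R} (hs : IsSumSq s) (ht : IsSumSq t) :
    IsSumSq (s * t) := by
  induction hs with
  | zero => simpa using IsSumSq.zero
  | @sq_add a S pS ih =>
    rw [add_mul]
    exact IsSumSq.add (IsSumSq.sq_mul' a ht) ih

theorem isSumSq_sq' {R : Type*} [CommRing R] (q : R) : IsSumSq (q * q) := by
  simpa using IsSumSq.sq_add q 0 IsSumSq.zero

theorem isSumSq_C' {c : ℝ} (hc : 0 ≤ c) : IsSumSq (C c : ℝ[X]) := by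
  have : (C c : ℝ[X]) = C (Real.sqrt c) * C (Real.sqrt c) := by
    rw [← C_mul, Real.mul_self_sqrt hc]
  rw [this]; exact isSumSq_sq' _

theorem IsSumSq.eval_nonneg' {p : ℝ[X]} (hp : IsSumSq p) (x : ℝ) : 0 ≤ p.eval x := by
  induction hp with
  | zero => simp
  | @sq_add a S pS ih => simp only [eval_add, eval_mul]; nlinarith [ih]
theorem quot_nonneg' {a b : ℝ} (hab : a < b) {f q : ℝ[X]} (hf0 : f ≠ 0)
    (hf : ∀ x ∈ Set.Icc a b, 0 ≤ f.eval x)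
    (hp : ∀ x ∈ Set.Icc a b, 0 ≤ (f * q).eval x) :
    ∀ x ∈ Set.Icc a b, 0 ≤ q.eval x := by
  have hroots : Set.Finite {y : ℝ | f.IsRoot y} := Polynomial.finite_setOf_isRoot hf0
  intro x hx
  have key : ∀ y, y ∈ Set.Icc a b → ¬ f.IsRoot y → 0 ≤ q.eval y := by
    intro y hy hny
    have hfy : 0 < f.eval y := lt_of_le_of_ne (hf y hy) (fun h => hny h.symm)
    have := hp y hy
    rw [eval_mul] at this
    exact (mul_nonneg_iff_of_pos_left hfy).mp this
  have hT : Set.Finite ({y : ℝ | f.IsRoot y} \ {x}) := hroots.diff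
  have hTc : ({y : ℝ | f.IsRoot y} \ {x})ᶜ ∈ 𝓝 x :=
    hT.isClosed.isOpen_compl.mem_nhds (by simp)
  rcases lt_or_ge x b with hxb | hxb
  · have hI : Ioc x b ∈ 𝓝[>] x := Ioc_mem_nhdsGT_of_mem ⟨le_refl x, hxb⟩
    have hev : ∀ᶠ y in 𝓝[>] x, 0 ≤ q.eval y := by
      filter_upwards [hI, self_mem_nhdsWithin, mem_nhdsWithin_of_mem_nhds hTc]
        with y hy1 hy2 hy3
      refine key y ⟨le_trans hx.1 (le_of_lt hy1.1), hy1.2⟩ ?_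
      intro hr
      exact hy3 ⟨hr, ne_of_gt hy1.1⟩
    exact ge_of_tendsto ((q.continuous.tendsto x).mono_left nhdsWithin_le_nhds) hev
  · have hax : a < x := lt_of_lt_of_le hab hxb
    have hI : Ico a x ∈ 𝓝[<] x := Ico_mem_nhdsLT_of_mem ⟨hax, le_refl x⟩
    have hev : ∀ᶠ y in 𝓝[<] x, 0 ≤ q.eval y := by
      filter_upwards [hI, self_mem_nhdsWithin, mem_nhdsWithin_of_mem_nhds hTc]
        with y hy1 hy2 hy3
      refine key y ⟨hy1.1, le_trans (le_of_lt hy1.2) hx.2⟩ ?_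
      intro hr
      exact hy3 ⟨hr, ne_of_lt hy1.2⟩
    exact ge_of_tendsto ((q.continuous.tendsto x).mono_left nhdsWithin_le_nhds) hev
theorem sq_dvd_of_root' {a b r : ℝ} {p : ℝ[X]} (hp0 : p ≠ 0)
    (hp : ∀ x ∈ Set.Icc a b, 0 ≤ p.eval x) (hr : r ∈ Set.Ioo a b)
    (hroot : p.eval r = 0) : (X - C r)^2 ∣ p := by
  set m := p.rootMultiplicity r with hm
  have hm1 : 1 ≤ m := (Polynomial.rootMultiplicity_pos hp0).mpr hroot
  have hm2 : 2 ≤ m := by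
    by_contra hlt
    have hmeq : m = 1 := le_antisymm (by omega) hm1
    set q := p /ₘ (X - C r) ^ m with hq
    have hfac : (X - C r) ^ m * q = p := Polynomial.pow_mul_divByMonic_rootMultiplicity_eq p r
    have hqr : q.eval r ≠ 0 := Polynomial.eval_divByMonic_pow_rootMultiplicity_ne_zero r hp0
    rw [hmeq, pow_one] at hfac
    rcases lt_or_gt_of_ne hqr with hneg | hpos
    · -- q.eval r < 0 : take y slightly right of r
      have hev : ∀ᶠ y in 𝓝 r, q.eval y < 0 :=
        (q.continuous.tendsto r).eventually (eventually_lt_nhds hneg)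
      have hI : Ioo r b ∈ 𝓝[>] r := Ioo_mem_nhdsGT_of_mem ⟨le_refl r, hr.2⟩
      have : ∃ y, y ∈ Ioo r b ∧ q.eval y < 0 := by
        have hmem := Filter.inter_mem (mem_nhdsWithin_of_mem_nhds hev) hI
        rcases (Filter.nonempty_of_mem hmem) with ⟨y, h1, h2⟩
        exact ⟨y, h2, h1⟩
      rcases this with ⟨y, hy, hqy⟩
      have hyI : y ∈ Set.Icc a b := ⟨le_of_lt (lt_trans hr.1 hy.1), le_of_lt hy.2⟩
      have := hp y hyI
      rw [← hfac, eval_mul, eval_sub, eval_X, eval_C] at this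
      nlinarith [hy.1]
    · -- q.eval r > 0 : take y slightly left of r
      have hev : ∀ᶠ y in 𝓝 r, 0 < q.eval y :=
        (q.continuous.tendsto r).eventually (eventually_gt_nhds hpos)
      have hI : Ioo a r ∈ 𝓝[<] r := Ioo_mem_nhdsLT_of_mem ⟨hr.1, le_refl r⟩
      have : ∃ y, y ∈ Ioo a r ∧ 0 < q.eval y := by
        have hmem := Filter.inter_mem (mem_nhdsWithin_of_mem_nhds hev) hI
        rcases (Filter.nonempty_of_mem hmem) with ⟨y, h1, h2⟩
        exact ⟨y, h2, h1⟩
      rcases this with ⟨y, hy, hqy⟩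
      have hyI : y ∈ Set.Icc a b := ⟨le_of_lt hy.1, le_of_lt (lt_trans hy.2 hr.2)⟩
      have := hp y hyI
      rw [← hfac, eval_mul, eval_sub, eval_X, eval_C] at this
      nlinarith [hy.2]
  calc (X - C r)^2 ∣ (X - C r)^m := pow_dvd_pow _ hm2
    _ ∣ p := Polynomial.pow_rootMultiplicity_dvd p r
theorem quot_nonneg_global {f q : ℝ[X]} (hf0 : f ≠ 0)
    (hf : ∀ x : ℝ, 0 ≤ f.eval x)
    (hp : ∀ x : ℝ, 0 ≤ (f * q).eval x) : ∀ x : ℝ, 0 ≤ q.eval x := by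
  intro x
  have h : (x : ℝ) ∈ Set.Icc (x - 1) (x + 1) := by constructor <;> linarith
  exact quot_nonneg' (by linarith : x - 1 < x + 1) hf0
    (fun y _ => hf y) (fun y _ => hp y) x h

theorem sos_of_nonneg' : ∀ n (p : ℝ[X]), p.natDegree = n → (∀ x : ℝ, 0 ≤ p.eval x) → IsSumSq p := by
  intro n
  induction n using Nat.strong_induction_on with
  | _ n ih =>
    intro p hdeg hp
    by_cases hp0 : p = 0
    · simpa [hp0] using IsSumSq.zero
    by_cases hdeg0 : p.natDegree = 0
    · obtain ⟨c, rfl⟩ := Polynomial.natDegree_eq_zero.mp hdeg0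
      exact isSumSq_C' (by simpa using hp 0)
    -- complex root
    set P := p.map (algebraMap ℝ ℂ) with hP
    have hPdeg : 0 < P.degree := by
      rw [hP, Polynomial.degree_map]
      exact Polynomial.natDegree_pos_iff_degree_pos.mp (Nat.pos_of_ne_zero hdeg0)
    obtain ⟨z, hz⟩ := Complex.exists_root hPdeg
    have haev : (Polynomial.aeval z) p = 0 := by
      rwa [Polynomial.aeval_def, ← Polynomial.eval_map]
    by_cases him : z.im = 0
    · -- real root
      set r := z.re with hr
      have hzr : z = (r : ℂ) := Complex.ext rfl (by simpa using him)
      have hroot : p.eval r = 0 := by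
        rw [hzr, ← Complex.coe_algebraMap,
          Polynomial.aeval_algebraMap_apply_eq_algebraMap_eval, Complex.coe_algebraMap] at haev
        exact_mod_cast haev
      have hdvd : (X - C r)^2 ∣ p :=
        sq_dvd_of_root' hp0 (fun x _ => hp x) (⟨by linarith, by linarith⟩ : r ∈ Set.Ioo (r-1) (r+1)) hroot
      obtain ⟨q, hq⟩ := hdvd
      have hf0 : ((X - C r)^2 : ℝ[X]) ≠ 0 := pow_ne_zero _ (Polynomial.X_sub_C_ne_zero r)
      have hfnn : ∀ x : ℝ, 0 ≤ ((X - C r)^2 : ℝ[X]).eval x := by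
        intro x; simp only [eval_pow, eval_sub, eval_X, eval_C]; positivity
      have hqnn : ∀ x : ℝ, 0 ≤ q.eval x :=
        quot_nonneg_global hf0 hfnn (fun x => by rw [← hq]; exact hp x)
      have hq0 : q ≠ 0 := fun h => hp0 (by rw [hq, h, mul_zero])
      have hqdeg : q.natDegree < n := by
        have := Polynomial.natDegree_mul hf0 hq0
        rw [← hq] at this
        have h2 : ((X - C r)^2 : ℝ[X]).natDegree = 2 := by
          rw [Polynomial.natDegree_pow, Polynomial.natDegree_X_sub_C]
        omega
      have hqs : IsSumSq q := ih _ hqdeg q rfl hqnn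
      rw [hq, sq]
      exact IsSumSq.mul'' (isSumSq_sq' _) hqs
    · -- complex conjugate pair
      set d : ℝ[X] := (X - C z.re)^2 + C (z.im * z.im) with hd
      have hds : IsSumSq d := by
        rw [hd, sq, C_mul]
        exact IsSumSq.add (isSumSq_sq' _) (isSumSq_sq' _)
      have hdmap : d.map (algebraMap ℝ ℂ) = (X - C z) * (X - C (conj z)) := by
        have expand : ((X - C z) * (X - C (conj z)) : ℂ[X])
            = X^2 - C (z + conj z) * X + C (z * conj z) := by
          simp only [map_add, map_mul]; ring
        rw [expand, Complex.add_conj, Complex.mul_conj, Complex.normSq_apply]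
        simp only [hd, Polynomial.map_add, Polynomial.map_pow, Polynomial.map_sub,
          Polynomial.map_X, Polynomial.map_C]
        push_cast
        simp only [map_add, map_mul, map_ofNat, Complex.coe_algebraMap]
        ring
      have hzne : z ≠ conj z := fun h => him (Complex.conj_eq_iff_im.mp h.symm)
      have hcop : IsCoprime ((X - C z) : ℂ[X]) (X - C (conj z)) :=
        Polynomial.isCoprime_X_sub_C_of_isUnit_sub (isUnit_iff_ne_zero.mpr (sub_ne_zero.mpr hzne))
      have hdvd1 : (X - C z) ∣ P := Polynomial.dvd_iff_isRoot.mpr hz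
      have hdvd2 : (X - C (conj z)) ∣ P := by
        apply Polynomial.dvd_iff_isRoot.mpr
        have : (Polynomial.aeval (conj z)) p = 0 := by
          rw [Polynomial.aeval_conj, haev, map_zero]
        rwa [Polynomial.aeval_def, ← Polynomial.eval_map] at this
      have hdvdP : d.map (algebraMap ℝ ℂ) ∣ P := by
        rw [hdmap]; exact hcop.mul_dvd hdvd1 hdvd2
      have hdvd : d ∣ p := (Polynomial.map_dvd_map' (algebraMap ℝ ℂ)).mp hdvdP
      obtain ⟨q, hq⟩ := hdvd
      have hdpos : ∀ x : ℝ, 0 < d.eval x := by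
        intro x
        simp only [hd, eval_add, eval_pow, eval_sub, eval_X, eval_C]
        nlinarith [sq_nonneg (x - z.re), mul_self_pos.mpr him]
      have hd0 : d ≠ 0 := fun h => by simpa [h] using (hdpos 0)
      have hqnn : ∀ x : ℝ, 0 ≤ q.eval x :=
        quot_nonneg_global hd0 (fun x => (hdpos x).le) (fun x => by rw [← hq]; exact hp x)
      have hq0 : q ≠ 0 := fun h => hp0 (by rw [hq, h, mul_zero])
      have hqdeg : q.natDegree < n := by
        have hmul := Polynomial.natDegree_mul hd0 hq0
        rw [← hq] at hmul
        have h2 : d.natDegree = 2 := by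
          rw [hd, Polynomial.natDegree_add_C, Polynomial.natDegree_pow,
            Polynomial.natDegree_X_sub_C]
        omega
      have hqs : IsSumSq q := ih _ hqdeg q rfl hqnn
      rw [hq]
      exact IsSumSq.mul'' hds hqs
def InC (a b : ℝ) (p : ℝ[X]) : Prop :=
  ∃ σ0 σ1 : ℝ[X], IsSumSq σ0 ∧ IsSumSq σ1 ∧ p = σ0 + (X - C a) * (C b - X) * σ1

theorem InC.of_sos {a b : ℝ} {p : ℝ[X]} (h : IsSumSq p) : InC a b p :=
  ⟨p, 0, h, IsSumSq.zero, by ring⟩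

theorem InC.add {a b : ℝ} {p q : ℝ[X]} (hp : InC a b p) (hq : InC a b q) : InC a b (p + q) := by
  obtain ⟨s0, s1, hs0, hs1, rfl⟩ := hp
  obtain ⟨t0, t1, ht0, ht1, rfl⟩ := hq
  exact ⟨s0 + t0, s1 + t1, hs0.add ht0, hs1.add ht1, by ring⟩

theorem InC.mul {a b : ℝ} {p q : ℝ[X]} (hp : InC a b p) (hq : InC a b q) : InC a b (p * q) := by
  obtain ⟨s0, s1, hs0, hs1, rfl⟩ := hp
  obtain ⟨t0, t1, ht0, ht1, rfl⟩ := hq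
  refine ⟨s0 * t0 + ((X - C a) * (C b - X)) * ((X - C a) * (C b - X)) * (s1 * t1),
    s0 * t1 + s1 * t0, ?_, ?_, by ring⟩
  · exact (hs0.mul'' ht0).add ((isSumSq_sq' _).mul'' (hs1.mul'' ht1))
  · exact (hs0.mul'' ht1).add (hs1.mul'' ht0)

theorem InC_X_sub_a {a b : ℝ} (hab : a < b) : InC a b (X - C a) := by
  have hu0 : 0 ≤ (b - a)⁻¹ := inv_nonneg.mpr (by linarith)
  have hba : b - a ≠ 0 := by linarith
  refine ⟨C (b - a)⁻¹ * ((X - C a) * (X - C a)), C (b - a)⁻¹, (isSumSq_C' hu0).mul'' (isSumSq_sq' _),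
    isSumSq_C' hu0, ?_⟩
  apply Polynomial.funext
  intro x
  simp only [eval_add, eval_mul, eval_sub, eval_X, eval_C]
  field_simp
  ring

theorem InC_b_sub_X {a b : ℝ} (hab : a < b) : InC a b (C b - X) := by
  have hu0 : 0 ≤ (b - a)⁻¹ := inv_nonneg.mpr (by linarith)
  have hba : b - a ≠ 0 := by linarith
  refine ⟨C (b - a)⁻¹ * ((C b - X) * (C b - X)), C (b - a)⁻¹, (isSumSq_C' hu0).mul'' (isSumSq_sq' _),
    isSumSq_C' hu0, ?_⟩
  apply Polynomial.funext
  intro x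
  simp only [eval_add, eval_mul, eval_sub, eval_X, eval_C]
  field_simp
  ring

theorem InC_X_sub_r {a b r : ℝ} (hab : a < b) (hr : r ≤ a) : InC a b (X - C r) := by
  have : (X - C r : ℝ[X]) = (X - C a) + C (a - r) := by
    rw [C_sub]; ring
  rw [this]
  exact (InC_X_sub_a hab).add (InC.of_sos (isSumSq_C' (by linarith)))

theorem InC_r_sub_X {a b r : ℝ} (hab : a < b) (hr : b ≤ r) : InC a b (C r - X) := by
  have : (C r - X : ℝ[X]) = (C b - X) + C (r - b) := by
    rw [C_sub]; ring
  rw [this]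
  exact (InC_b_sub_X hab).add (InC.of_sos (isSumSq_C' (by linarith)))

theorem mem_cone_of_nonneg {a b : ℝ} (hab : a < b) :
    ∀ n (p : ℝ[X]), p.natDegree = n → (∀ x ∈ Set.Icc a b, 0 ≤ p.eval x) → InC a b p := by
  intro n
  induction n using Nat.strong_induction_on with
  | _ n ih =>
    intro p hdeg hp
    by_cases hp0 : p = 0
    · exact ⟨0, 0, IsSumSq.zero, IsSumSq.zero, by rw [hp0]; ring⟩
    by_cases hroot : ∃ r : ℝ, p.eval r = 0
    swap
    · push_neg at hroot
      have hpa : 0 < p.eval a := lt_of_le_of_ne (hp a ⟨le_refl a, hab.le⟩) (Ne.symm (hroot a))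
      have hnn : ∀ x : ℝ, 0 ≤ p.eval x := by
        intro x
        by_contra hneg
        push_neg at hneg
        have hc : ContinuousOn (fun y : ℝ => p.eval y) (Set.uIcc x a) :=
          (Polynomial.continuous p).continuousOn
        have hsub : Set.uIcc (p.eval x) (p.eval a) ⊆ (fun y : ℝ => p.eval y) '' Set.uIcc x a :=
          intermediate_value_uIcc hc
        have h0 : (0 : ℝ) ∈ Set.uIcc (p.eval x) (p.eval a) :=
          Set.mem_uIcc.mpr (Or.inl ⟨hneg.le, hpa.le⟩)
        obtain ⟨y, _, hy⟩ := hsub h0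
        exact hroot y hy
      exact InC.of_sos (sos_of_nonneg' _ p rfl hnn)
    obtain ⟨r, hr⟩ := hroot
    rcases le_or_gt r a with hra | hra
    · obtain ⟨q, hq⟩ := Polynomial.dvd_iff_isRoot.mpr hr
      have hf0 : (X - C r : ℝ[X]) ≠ 0 := Polynomial.X_sub_C_ne_zero r
      have hq0 : q ≠ 0 := fun h => hp0 (by rw [hq, h, mul_zero])
      have hqnn : ∀ x ∈ Set.Icc a b, 0 ≤ q.eval x := by
        refine quot_nonneg' hab hf0 ?_ (fun x hx => by rw [← hq]; exact hp x hx)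
        intro x hx
        simp only [eval_sub, eval_X, eval_C]
        linarith [hx.1]
      have hqdeg : q.natDegree < n := by
        have hmul := Polynomial.natDegree_mul hf0 hq0
        rw [← hq, Polynomial.natDegree_X_sub_C] at hmul
        omega
      rw [hq]
      exact (InC_X_sub_r hab hra).mul (ih _ hqdeg q rfl hqnn)
    rcases le_or_gt b r with hrb | hrb
    · obtain ⟨q, hq⟩ := Polynomial.dvd_iff_isRoot.mpr hr
      have hf0 : (C r - X : ℝ[X]) ≠ 0 := by
        have : (C r - X : ℝ[X]) = -(X - C r) := by ring
        rw [this]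
        exact neg_ne_zero.mpr (Polynomial.X_sub_C_ne_zero r)
      have hq0 : q ≠ 0 := fun h => hp0 (by rw [hq, h, mul_zero])
      have hq' : p = (C r - X) * (-q) := by rw [hq]; ring
      have hqnn : ∀ x ∈ Set.Icc a b, 0 ≤ (-q).eval x := by
        refine quot_nonneg' hab hf0 ?_ (fun x hx => by rw [← hq']; exact hp x hx)
        intro x hx
        simp only [eval_sub, eval_X, eval_C]
        linarith [hx.2]
      have hqdeg : (-q).natDegree < n := by
        have hmul := Polynomial.natDegree_mul hf0 (neg_ne_zero.mpr hq0)
        rw [← hq'] at hmul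
        have h1 : (C r - X : ℝ[X]).natDegree = 1 := by
          have h2 : (C r - X : ℝ[X]) = -(X - C r) := by ring
          rw [h2, Polynomial.natDegree_neg, Polynomial.natDegree_X_sub_C]
        rw [h1] at hmul
        omega
      rw [hq']
      exact (InC_r_sub_X hab hrb).mul (ih _ hqdeg (-q) rfl hqnn)
    · obtain ⟨q, hq⟩ := sq_dvd_of_root' hp0 hp ⟨hra, hrb⟩ hr
      have hf0 : ((X - C r)^2 : ℝ[X]) ≠ 0 := pow_ne_zero _ (Polynomial.X_sub_C_ne_zero r)
      have hq0 : q ≠ 0 := fun h => hp0 (by rw [hq, h, mul_zero])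
      have hqnn : ∀ x ∈ Set.Icc a b, 0 ≤ q.eval x := by
        refine quot_nonneg' hab hf0 ?_ (fun x hx => by rw [← hq]; exact hp x hx)
        intro x hx
        simp only [eval_pow, eval_sub, eval_X, eval_C]
        positivity
      have hqdeg : q.natDegree < n := by
        have hmul := Polynomial.natDegree_mul hf0 hq0
        rw [← hq, Polynomial.natDegree_pow, Polynomial.natDegree_X_sub_C] at hmul
        omega
      rw [hq]
      have : InC a b ((X - C r)^2) := InC.of_sos (by rw [sq]; exact isSumSq_sq' _)
      exact this.mul (ih _ hqdeg q rfl hqnn)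

open Polynomial in
theorem stmt_9 (p : Polynomial ℝ) (a b : ℝ) (hab : a < b) :
    (∀ x ∈ Set.Icc a b, 0 ≤ p.eval x) ↔
      (if Even p.natDegree then
        ∃ σ0 σ1 : Polynomial ℝ, IsSumSq σ0 ∧ IsSumSq σ1 ∧
          p = σ0 + (X - C a) * (C b - X) * σ1
      else
        ∃ σ0 σ1 : Polynomial ℝ, IsSumSq σ0 ∧ IsSumSq σ1 ∧
          p = (X - C a) * σ0 + (C b - X) * σ1) := by
  constructor
  · intro hp
    obtain ⟨s0, s1, hs0, hs1, hps⟩ := mem_cone_of_nonneg hab p.natDegree p rfl hp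
    by_cases hpar : Even p.natDegree
    · rw [if_pos hpar]
      exact ⟨s0, s1, hs0, hs1, hps⟩
    · rw [if_neg hpar]
      have hu0 : 0 ≤ (b - a)⁻¹ := inv_nonneg.mpr (by linarith)
      have hba : b - a ≠ 0 := by linarith
      refine ⟨C (b - a)⁻¹ * (s0 + (C b - X) * (C b - X) * s1),
        C (b - a)⁻¹ * (s0 + (X - C a) * (X - C a) * s1),
        (isSumSq_C' hu0).mul'' (hs0.add ((isSumSq_sq' _).mul'' hs1)),
        (isSumSq_C' hu0).mul'' (hs0.add ((isSumSq_sq' _).mul'' hs1)), ?_⟩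
      apply Polynomial.funext
      intro x
      rw [hps]
      simp only [eval_add, eval_mul, eval_sub, eval_X, eval_C]
      field_simp
      ring
  · intro h x hx
    by_cases hpar : Even p.natDegree
    · rw [if_pos hpar] at h
      obtain ⟨s0, s1, hs0, hs1, rfl⟩ := h
      simp only [eval_add, eval_mul, eval_sub, eval_X, eval_C]
      have h1 := hs0.eval_nonneg' x
      have h2 := hs1.eval_nonneg' x
      exact add_nonneg h1 (mul_nonneg (mul_nonneg (sub_nonneg.mpr hx.1)
        (sub_nonneg.mpr hx.2)) h2)
    · rw [if_neg hpar] at h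
      obtain ⟨s0, s1, hs0, hs1, rfl⟩ := h
      simp only [eval_add, eval_mul, eval_sub, eval_X, eval_C]
      have h1 := hs0.eval_nonneg' x
      have h2 := hs1.eval_nonneg' x
      exact add_nonneg (mul_nonneg (sub_nonneg.mpr hx.1) h1)
        (mul_nonneg (sub_nonneg.mpr hx.2) h2)
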